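/- Let s, t : Fin M → ℝ. For every permutation σ of Fin M, the matching cost is bounded below by the integral of |F|: ∑_{i} |s(i) − t(σ(i))| ≥ ∫_ℝ |F(y)| dy. -/

import Mathlib

open Finset MeasureTheory

private lemma abs_ind_sub_ind (a b y : ℝ) :
    |Set.indicator (Set.Ioi a) (1 : ℝ → ℝ) y - Set.indicator (Set.Ioi b) (1 : ℝ → ℝ) y|
      = Set.indicator (Set.Ioc (min a b) (max a b)) (1 : ℝ → ℝ) y := by
  rcases le_total a b with h | h
  · simp only [min_eq_left h, max_eq_right h]
    by_cases h1 : a < y <;> by_cases h2 : b < y <;>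
      simp_all [Set.indicator_apply, Set.mem_Ioi, Set.mem_Ioc] <;>
      first | linarith | (intro hc; linarith)
  · simp only [min_eq_right h, max_eq_left h]
    by_cases h1 : a < y <;> by_cases h2 : b < y <;>
      simp_all [Set.indicator_apply, Set.mem_Ioi, Set.mem_Ioc] <;>
      first | linarith | (intro hc; linarith)

private lemma integrable_ioc_ind (a b : ℝ) :
    Integrable (Set.indicator (Set.Ioc a b) (1 : ℝ → ℝ)) := by
  rw [integrable_indicator_iff measurableSet_Ioc]
  exact integrableOn_const measure_Ioc_lt_top.ne

private lemma integral_ioc_ind (a b : ℝ) :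
    ∫ y : ℝ, Set.indicator (Set.Ioc (min a b) (max a b)) (1 : ℝ → ℝ) y = |a - b| := by
  rw [MeasureTheory.integral_indicator_one measurableSet_Ioc, measureReal_def, Real.volume_Ioc,
    ENNReal.toReal_ofReal (by simp [min_le_max])]
  rw [max_sub_min_eq_abs, abs_sub_comm]

theorem matching_cost_ge_integral (M : ℕ) (s t : Fin M → ℝ)
    (σ : Equiv.Perm (Fin M)) :
    ∑ i, |s i - t (σ i)| ≥
      ∫ y : ℝ, |(((univ.filter fun i => s i < y).card : ℤ)
        - ((univ.filter fun i => t i < y).card : ℤ) : ℝ)| := by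
  have hF : ∀ y : ℝ,
      |(((univ.filter fun i => s i < y).card : ℤ)
        - ((univ.filter fun i => t i < y).card : ℤ) : ℝ)|
      = |∑ i, (Set.indicator (Set.Ioi (s i)) (1 : ℝ → ℝ) y
          - Set.indicator (Set.Ioi (t (σ i))) (1 : ℝ → ℝ) y)| := by
    intro y
    have hs : (((univ.filter fun i => s i < y).card : ℤ) : ℝ)
        = ∑ i, Set.indicator (Set.Ioi (s i)) (1 : ℝ → ℝ) y := by
      rw [Finset.card_filter]
      push_cast
      exact Finset.sum_congr rfl fun i _ => by
        simp [Set.indicator_apply, Set.mem_Ioi]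
    have ht : (((univ.filter fun i => t i < y).card : ℤ) : ℝ)
        = ∑ i, Set.indicator (Set.Ioi (t (σ i))) (1 : ℝ → ℝ) y := by
      rw [Finset.card_filter]
      push_cast
      have h1 : ∀ i, (if t i < y then (1:ℝ) else 0)
          = Set.indicator (Set.Ioi (t i)) (1 : ℝ → ℝ) y := fun i => by
        simp [Set.indicator_apply, Set.mem_Ioi]
      simp_rw [h1]
      exact (Equiv.sum_comp σ (fun i => Set.indicator (Set.Ioi (t i)) (1 : ℝ → ℝ) y)).symm
    push_cast at hs ht ⊢
    rw [hs, ht, ← Finset.sum_sub_distrib]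
  have key : ∀ y : ℝ,
      |∑ i, (Set.indicator (Set.Ioi (s i)) (1 : ℝ → ℝ) y
          - Set.indicator (Set.Ioi (t (σ i))) (1 : ℝ → ℝ) y)|
      ≤ ∑ i, Set.indicator (Set.Ioc (min (s i) (t (σ i))) (max (s i) (t (σ i))))
          (1 : ℝ → ℝ) y := by
    intro y
    refine le_trans (Finset.abs_sum_le_sum_abs _ _) ?_
    exact le_of_eq (Finset.sum_congr rfl fun i _ => abs_ind_sub_ind _ _ y)
  have hgint : Integrable (fun y => ∑ i,
      Set.indicator (Set.Ioc (min (s i) (t (σ i))) (max (s i) (t (σ i))))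
        (1 : ℝ → ℝ) y) :=
    integrable_finset_sum _ fun i _ => integrable_ioc_ind _ _
  have hfmeas : AEStronglyMeasurable (fun y : ℝ =>
      |∑ i, (Set.indicator (Set.Ioi (s i)) (1 : ℝ → ℝ) y
          - Set.indicator (Set.Ioi (t (σ i))) (1 : ℝ → ℝ) y)|) volume := by
    apply Measurable.aestronglyMeasurable
    apply Measurable.abs
    apply Finset.measurable_sum
    intro i _
    exact ((measurable_const.indicator measurableSet_Ioi).sub
      (measurable_const.indicator measurableSet_Ioi))
  have hfint : Integrable (fun y : ℝ =>
      |∑ i, (Set.indicator (Set.Ioi (s i)) (1 : ℝ → ℝ) y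
          - Set.indicator (Set.Ioi (t (σ i))) (1 : ℝ → ℝ) y)|) := by
    refine hgint.mono hfmeas (Filter.Eventually.of_forall fun y => ?_)
    rw [Real.norm_eq_abs, Real.norm_eq_abs, abs_abs]
    refine le_trans (key y) (le_abs_self _)
  calc ∫ y : ℝ, |(((univ.filter fun i => s i < y).card : ℤ)
        - ((univ.filter fun i => t i < y).card : ℤ) : ℝ)|
      = ∫ y : ℝ, |∑ i, (Set.indicator (Set.Ioi (s i)) (1 : ℝ → ℝ) y
          - Set.indicator (Set.Ioi (t (σ i))) (1 : ℝ → ℝ) y)| := by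
        exact integral_congr_ae (Filter.Eventually.of_forall hF)
    _ ≤ ∫ y : ℝ, ∑ i, Set.indicator (Set.Ioc (min (s i) (t (σ i)))
          (max (s i) (t (σ i)))) (1 : ℝ → ℝ) y :=
        integral_mono hfint hgint key
    _ = ∑ i, ∫ y : ℝ, Set.indicator (Set.Ioc (min (s i) (t (σ i)))
          (max (s i) (t (σ i)))) (1 : ℝ → ℝ) y :=
        integral_finset_sum _ fun i _ => integrable_ioc_ind _ _
    _ = ∑ i, |s i - t (σ i)| :=
        Finset.sum_congr rfl fun i _ => integral_ioc_ind _ _
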